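/- Fix N ∈ ℕ, bounded functions c₁, …, c_N : (0,∞) → ℝ, and a function γ : (0,∞) → (0,∞). Then δ·[ Σ_{k=0}^∞ Σ_{n=1}^N c_n(δ)·e^{−(2k+1)nδ} − (1/(2π))·∬_{ℝ²} Σ_{n=1}^N c_n(δ)·(σ_δ^{(γ(δ))}(x,ξ))^n dx dξ ] → 0 as δ → 0+. -/

import Mathlib

open Real Filter Set MeasureTheory

lemma aux_sinh : Tendsto (fun t : ℝ => Real.sinh t / t) (nhdsWithin 0 {(0:ℝ)}ᶜ) (nhds 1) := by
  have h := Real.hasDerivAt_sinh 0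
  rw [hasDerivAt_iff_tendsto_slope] at h
  simpa [slope_fun_def, Real.sinh_zero, Real.cosh_zero, div_eq_inv_mul] using h

lemma aux_div_sinh (m : ℝ) (hm : 0 < m) :
    Tendsto (fun δ : ℝ => δ / Real.sinh (m * δ)) (nhdsWithin 0 (Set.Ioi 0)) (nhds m⁻¹) := by
  have hmap : Tendsto (fun δ : ℝ => m * δ) (nhdsWithin 0 (Set.Ioi 0))
      (nhdsWithin 0 {(0:ℝ)}ᶜ) := by
    apply Tendsto.mono_right _ (nhdsWithin_mono _ (by intro x hx; exact ne_of_gt hx))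
    refine tendsto_nhdsWithin_of_tendsto_nhds_of_eventually_within _ ?_ ?_
    · simpa using (tendsto_const_nhds.mul tendsto_id : Tendsto (fun δ : ℝ => m * δ) (nhds 0) (nhds (m * 0))).mono_left nhdsWithin_le_nhds
    · filter_upwards [self_mem_nhdsWithin] with x hx
      exact mul_pos hm hx
  have h1 : Tendsto (fun δ : ℝ => Real.sinh (m * δ) / (m * δ)) (nhdsWithin 0 (Set.Ioi 0)) (nhds 1) :=
    aux_sinh.comp hmap
  have h2 := (h1.inv₀ one_ne_zero).mul_const m⁻¹
  rw [inv_one, one_mul] at h2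
  apply h2.congr'
  filter_upwards [self_mem_nhdsWithin] with δ hδ
  have hδ0 : (0:ℝ) < δ := hδ
  have hs : Real.sinh (m * δ) ≠ 0 := ne_of_gt (by rw [Real.sinh_pos_iff]; positivity)
  field_simp

noncomputable def termF (m : ℕ) (δ : ℝ) : ℝ :=
  δ / (2 * Real.sinh (((m:ℝ)+1) * δ)) -
    δ * ((Real.cosh δ)⁻¹)^(m+1) / (2*((m:ℝ)+1)*Real.tanh δ)

lemma tendsto_termF (m : ℕ) :
    Tendsto (termF m) (nhdsWithin 0 (Set.Ioi 0)) (nhds 0) := by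
  set M : ℝ := (m:ℝ)+1 with hM
  have hMpos : 0 < M := by positivity
  have hcosh : Tendsto (fun δ : ℝ => Real.cosh δ) (nhdsWithin 0 (Set.Ioi 0)) (nhds 1) := by
    simpa using (Real.continuous_cosh.tendsto 0).mono_left nhdsWithin_le_nhds
  have hC : Tendsto (fun δ : ℝ => ((Real.cosh δ)⁻¹)^(m+1)) (nhdsWithin 0 (Set.Ioi 0))
      (nhds 1) := by
    simpa using ((hcosh.inv₀ one_ne_zero).pow (m+1))
  have h1 : Tendsto (fun δ : ℝ => δ / Real.sinh (M * δ) / 2) (nhdsWithin 0 (Set.Ioi 0))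
      (nhds (M⁻¹ / 2)) := (aux_div_sinh M hMpos).div_const 2
  have hsone := aux_div_sinh 1 one_pos
  have h2 : Tendsto (fun δ : ℝ =>
      ((Real.cosh δ)⁻¹)^(m+1) * ((δ / Real.sinh (1 * δ)) * Real.cosh δ) / (2*M))
      (nhdsWithin 0 (Set.Ioi 0)) (nhds (1 * ((1:ℝ)⁻¹ * 1) / (2*M))) :=
    (hC.mul (hsone.mul hcosh)).div_const _
  have htot := h1.sub h2
  have hlim : M⁻¹ / 2 - 1 * ((1:ℝ)⁻¹ * 1) / (2*M) = 0 := by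
    field_simp; ring
  rw [hlim] at htot
  apply htot.congr'
  filter_upwards [self_mem_nhdsWithin] with δ hδ
  have hδ0 : (0:ℝ) < δ := hδ
  have hch : Real.cosh δ ≠ 0 := ne_of_gt (Real.cosh_pos δ)
  have hsh : Real.sinh δ ≠ 0 := ne_of_gt (by rwa [Real.sinh_pos_iff])
  rw [termF, Real.tanh_eq_sinh_div_cosh]
  rw [one_mul]
  field_simp
  ring

lemma exp_geom_rw (C m δ : ℝ) (k : ℕ) :
    C * Real.exp (-((2*(k:ℝ)+1)*m*δ)) =
      (C * Real.exp (-(m*δ))) * Real.exp (-(2*m*δ)) ^ k := by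
  have harg : -((2*(k:ℝ)+1)*m*δ) = -(m*δ) + (k:ℝ)*(-(2*m*δ)) := by ring
  rw [harg, Real.exp_add, Real.exp_nat_mul]
  ring

lemma geom_summable (C m δ : ℝ) (hm : 0 < m) (hδ : 0 < δ) :
    Summable (fun k : ℕ => C * Real.exp (-((2*(k:ℝ)+1)*m*δ))) := by
  have hr : Real.exp (-(2*m*δ)) < 1 := by
    rw [Real.exp_lt_one_iff]; nlinarith
  exact Summable.congr ((summable_geometric_of_lt_one (Real.exp_nonneg _) hr).mul_left
    (C * Real.exp (-(m*δ)))) (fun k => (exp_geom_rw C m δ k).symm)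

lemma geom_eval (C m δ : ℝ) (hm : 0 < m) (hδ : 0 < δ) :
    ∑' k : ℕ, C * Real.exp (-((2*(k:ℝ)+1)*m*δ)) = C * (1/(2*Real.sinh (m*δ))) := by
  have hr : Real.exp (-(2*m*δ)) < 1 := by
    rw [Real.exp_lt_one_iff]; nlinarith
  simp_rw [exp_geom_rw C m δ]
  rw [tsum_mul_left, tsum_geometric_of_lt_one (Real.exp_nonneg _) hr]
  have e1 : Real.exp (-(m*δ)) * Real.exp (m*δ) = 1 := by
    rw [← Real.exp_add]; simp
  have e2 : Real.exp (-(m*δ)) * Real.exp (-(m*δ)) = Real.exp (-(2*m*δ)) := by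
    rw [← Real.exp_add]; ring_nf
  have h1 : 1 - Real.exp (-(2*m*δ)) = Real.exp (-(m*δ)) * (2 * Real.sinh (m*δ)) := by
    rw [Real.sinh_eq]
    linear_combination e2 - e1
  have hs : Real.sinh (m*δ) ≠ 0 := ne_of_gt (by rw [Real.sinh_pos_iff]; positivity)
  rw [h1]
  field_simp

lemma point_rw (C : ℝ) (m : ℕ) (δ g : ℝ) (p : ℝ × ℝ) :
    C * ((Real.cosh δ)⁻¹ *
        Real.exp (-(Real.tanh δ) * (g⁻¹^2 * p.1^2 + g^2 * p.2^2)))^(m+1)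
      = (C * ((Real.cosh δ)⁻¹)^(m+1)) *
        (Real.exp (-(((m:ℝ)+1)*Real.tanh δ*g⁻¹^2) * p.1^2) *
         Real.exp (-(((m:ℝ)+1)*Real.tanh δ*g^2) * p.2^2)) := by
  rw [mul_pow, ← Real.exp_nat_mul, ← Real.exp_add]
  have harg : ((m+1:ℕ):ℝ) * (-(Real.tanh δ)*(g⁻¹^2*p.1^2+g^2*p.2^2)) =
      (-(((m:ℝ)+1)*Real.tanh δ*g⁻¹^2)*p.1^2) + (-(((m:ℝ)+1)*Real.tanh δ*g^2)*p.2^2) := by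
    push_cast; ring
  rw [harg]; ring

lemma tanh_pos' {δ : ℝ} (hδ : 0 < δ) : 0 < Real.tanh δ := by
  rw [Real.tanh_eq_sinh_div_cosh]
  exact div_pos (by rwa [Real.sinh_pos_iff]) (Real.cosh_pos δ)

lemma int_integrable (C : ℝ) (m : ℕ) (δ g : ℝ) (hδ : 0 < δ) (hg : 0 < g) :
    Integrable (fun p : ℝ × ℝ => C * ((Real.cosh δ)⁻¹ *
        Real.exp (-(Real.tanh δ) * (g⁻¹^2 * p.1^2 + g^2 * p.2^2)))^(m+1)) := by
  have ht := tanh_pos' hδ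
  have hp : (0:ℝ) < ((m:ℝ)+1)*Real.tanh δ*g⁻¹^2 := by positivity
  have hq : (0:ℝ) < ((m:ℝ)+1)*Real.tanh δ*g^2 := by positivity
  have hbase : Integrable (fun p : ℝ × ℝ =>
      Real.exp (-(((m:ℝ)+1)*Real.tanh δ*g⁻¹^2) * p.1^2) *
      Real.exp (-(((m:ℝ)+1)*Real.tanh δ*g^2) * p.2^2)) := by
    have := (integrable_exp_neg_mul_sq hp).mul_prod (integrable_exp_neg_mul_sq hq)
    rw [MeasureTheory.Measure.volume_eq_prod]
    simpa using this
  exact (hbase.const_mul _).congr (Eventually.of_forall fun p => (point_rw C m δ g p).symm)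

lemma int_eval (C : ℝ) (m : ℕ) (δ g : ℝ) (hδ : 0 < δ) (hg : 0 < g) :
    ∫ p : ℝ × ℝ, C * ((Real.cosh δ)⁻¹ *
        Real.exp (-(Real.tanh δ) * (g⁻¹^2 * p.1^2 + g^2 * p.2^2)))^(m+1)
      = C * ((Real.cosh δ)⁻¹)^(m+1) * (π / (((m:ℝ)+1) * Real.tanh δ)) := by
  have ht := tanh_pos' hδ
  have hp : (0:ℝ) < ((m:ℝ)+1)*Real.tanh δ*g⁻¹^2 := by positivity
  have hq : (0:ℝ) < ((m:ℝ)+1)*Real.tanh δ*g^2 := by positivity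
  simp_rw [point_rw C m δ g]
  rw [MeasureTheory.integral_const_mul]
  have hprod : (∫ p : ℝ × ℝ,
      Real.exp (-(((m:ℝ)+1)*Real.tanh δ*g⁻¹^2) * p.1^2) *
      Real.exp (-(((m:ℝ)+1)*Real.tanh δ*g^2) * p.2^2))
      = (∫ x : ℝ, Real.exp (-(((m:ℝ)+1)*Real.tanh δ*g⁻¹^2) * x^2)) *
        (∫ x : ℝ, Real.exp (-(((m:ℝ)+1)*Real.tanh δ*g^2) * x^2)) := by
    rw [MeasureTheory.Measure.volume_eq_prod]
    exact MeasureTheory.integral_prod_mul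
      (fun x : ℝ => Real.exp (-(((m:ℝ)+1)*Real.tanh δ*g⁻¹^2) * x^2))
      (fun x : ℝ => Real.exp (-(((m:ℝ)+1)*Real.tanh δ*g^2) * x^2))
  rw [hprod, integral_gaussian, integral_gaussian,
    ← Real.sqrt_mul (by positivity)]
  have hsq : π / (((m:ℝ)+1)*Real.tanh δ*g⁻¹^2) * (π / (((m:ℝ)+1)*Real.tanh δ*g^2))
      = (π / (((m:ℝ)+1) * Real.tanh δ))^2 := by
    field_simp
  rw [hsq, Real.sqrt_sq (by positivity)]


/-- Lemma 1 of the paper (Appendix B): for every polynomial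
`G_N(x,z) = Σ_{n=1}^N c_n(x)·zⁿ` with bounded variable coefficients, the eigenvalue sum of the
time–frequency localization operator is asymptotically its Weyl-symbol integral:
`δ·[Σ_k Σ_{n=1}^N c_n(δ)·e^{−(2k+1)nδ} −
   (1/(2π))·∬ Σ_{n=1}^N c_n(δ)·(σ_δ^{(γ(δ))}(x,ξ))ⁿ dx dξ] → 0` as `δ → 0+`,
where `σ_δ^{(γ)}(x,ξ) = (1/cosh δ)·exp(−tanh δ·(γ⁻²x² + γ²ξ²))`. -/
theorem szego_lemma_polynomial
    (N : ℕ) (c : Fin N → ℝ → ℝ)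
    (hc : ∀ n : Fin N, ∃ M : ℝ, ∀ δ > 0, |c n δ| ≤ M)
    (γ : ℝ → ℝ) (hγ : ∀ δ > 0, 0 < γ δ) :
    Filter.Tendsto
      (fun δ : ℝ =>
        δ * ((∑' k : ℕ, ∑ n : Fin N,
            c n δ * Real.exp (-((2 * (k : ℝ) + 1) * ((n : ℝ) + 1) * δ))) -
          (1 / (2 * π)) * ∫ p : ℝ × ℝ, ∑ n : Fin N,
            c n δ * ((Real.cosh δ)⁻¹ *
              Real.exp (-(Real.tanh δ) *
                ((γ δ)⁻¹ ^ 2 * p.1 ^ 2 + (γ δ) ^ 2 * p.2 ^ 2))) ^ ((n : ℕ) + 1)))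
      (nhdsWithin 0 (Set.Ioi 0)) (nhds 0) := by
  have hlim : Tendsto (fun δ => ∑ n : Fin N, c n δ * termF (n : ℕ) δ)
      (nhdsWithin 0 (Set.Ioi 0)) (nhds 0) := by
    have hterm : ∀ n : Fin N, Tendsto (fun δ => c n δ * termF (n : ℕ) δ)
        (nhdsWithin 0 (Set.Ioi 0)) (nhds 0) := by
      intro n
      obtain ⟨M, hM⟩ := hc n
      refine squeeze_zero_norm' (a := fun δ => M * |termF (n : ℕ) δ|) ?_ ?_
      · filter_upwards [self_mem_nhdsWithin] with δ hδ
        rw [Real.norm_eq_abs, abs_mul]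
        exact mul_le_mul_of_nonneg_right (hM δ hδ) (abs_nonneg _)
      · have h := ((tendsto_termF (n : ℕ)).abs).const_mul M
        simpa using h
    have hsum := tendsto_finset_sum Finset.univ (fun n (_ : n ∈ Finset.univ) => hterm n)
    simpa using hsum
  apply hlim.congr'
  filter_upwards [self_mem_nhdsWithin] with δ hδ
  have hδ0 : (0:ℝ) < δ := hδ
  have hg := hγ δ hδ0
  have hsum_eq : (∑' k : ℕ, ∑ n : Fin N,
      c n δ * Real.exp (-((2 * (k : ℝ) + 1) * ((n : ℝ) + 1) * δ)))
      = ∑ n : Fin N, c n δ * (1/(2*Real.sinh (((n:ℝ)+1)*δ))) := by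
    rw [Summable.tsum_finsetSum (fun n _ => geom_summable (c n δ) ((n:ℝ)+1) δ (by positivity) hδ0)]
    exact Finset.sum_congr rfl fun n _ => geom_eval (c n δ) ((n:ℝ)+1) δ (by positivity) hδ0
  have hint_eq : (∫ p : ℝ × ℝ, ∑ n : Fin N,
      c n δ * ((Real.cosh δ)⁻¹ *
        Real.exp (-(Real.tanh δ) *
          ((γ δ)⁻¹ ^ 2 * p.1 ^ 2 + (γ δ) ^ 2 * p.2 ^ 2))) ^ ((n : ℕ) + 1))
      = ∑ n : Fin N, c n δ * ((Real.cosh δ)⁻¹)^((n:ℕ)+1) *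
          (π / ((((n:ℕ):ℝ)+1) * Real.tanh δ)) := by
    rw [MeasureTheory.integral_finset_sum _
      (fun n _ => int_integrable (c n δ) (n : ℕ) δ (γ δ) hδ0 hg)]
    exact Finset.sum_congr rfl fun n _ =>
      int_eval (c n δ) (n : ℕ) δ (γ δ) hδ0 hg
  rw [hsum_eq, hint_eq, Finset.mul_sum, mul_sub, Finset.mul_sum, Finset.mul_sum,
    ← Finset.sum_sub_distrib]
  apply Finset.sum_congr rfl
  intro n _
  have ht : Real.tanh δ ≠ 0 := ne_of_gt (tanh_pos' hδ0)
  have hs : Real.sinh (((n:ℝ)+1)*δ) ≠ 0 :=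
    ne_of_gt (by rw [Real.sinh_pos_iff]; positivity)
  have hπ := Real.pi_ne_zero
  have hcast : ((n:ℕ):ℝ) = (n:ℝ) := rfl
  rw [termF, hcast]
  field_simp
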